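/- Let M be an m×n matrix over ZMod 2 and let R = M * V be a reduction of M (V invertible upper-triangular, R reduced). Then for every row index i and column index j, the rank of the lower-left submatrix of M consisting of rows ≥ i and columns ≤ j equals the number of column indices l ≤ j such that column l of R is nonzero and low_R(l) ≥ i. -/

import Mathlib

open Matrix


/-- `i` is the lowest nonzero row index of column `j` of `R`. -/
def IsLow {m n : ℕ} (R : Matrix (Fin m) (Fin n) (ZMod 2)) (j : Fin n) (i : Fin m) : Prop :=
  R i j ≠ 0 ∧ ∀ i' : Fin m, R i' j ≠ 0 → i' ≤ i

/-- No two distinct nonzero columns of `R` have the same lowest nonzero row index. -/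
def Reduced {m n : ℕ} (R : Matrix (Fin m) (Fin n) (ZMod 2)) : Prop :=
  ∀ j k : Fin n, j ≠ k → ∀ i i' : Fin m, IsLow R j i → IsLow R k i' → i ≠ i'

/-- `W` is upper-triangular: `W i j = 0` whenever `i > j`. -/
def UpperTri {n : ℕ} (W : Matrix (Fin n) (Fin n) (ZMod 2)) : Prop :=
  ∀ i j : Fin n, j < i → W i j = 0

/-- Rank of the lower-left submatrix of `M` consisting of rows `≥ i` and columns `≤ j`. -/
noncomputable def llRank {m n : ℕ} (M : Matrix (Fin m) (Fin n) (ZMod 2))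
    (i : Fin m) (j : Fin n) : ℕ :=
  (M.submatrix (fun a : {a : Fin m // i ≤ a} => a.1)
    (fun b : {b : Fin n // b ≤ j} => b.1)).rank

lemma exists_isLow {m n : ℕ} (R : Matrix (Fin m) (Fin n) (ZMod 2)) (l : Fin n) (a : Fin m)
    (h : R a l ≠ 0) : ∃ il : Fin m, IsLow R l il ∧ a ≤ il := by
  classical
  set F : Finset (Fin m) := Finset.univ.filter (fun i' => R i' l ≠ 0) with hF
  have hne : F.Nonempty := ⟨a, by simp [hF, h]⟩
  refine ⟨F.max' hne, ⟨?_, ?_⟩, ?_⟩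
  · have := F.max'_mem hne
    simpa [hF] using this
  · intro i' hi'
    exact F.le_max' i' (by simp [hF, hi'])
  · exact F.le_max' a (by simp [hF, h])

lemma lin_indep_of_lows {K : Type*} [Field K] {ρ ι : Type*} [Fintype ι] [LinearOrder ρ]
    (v : ι → ρ → K) (low : ι → ρ) (h1 : ∀ s, v s (low s) ≠ 0)
    (h2 : ∀ s r, low s < r → v s r = 0) (hinj : Function.Injective low) :
    LinearIndependent K v := by
  classical
  rw [Fintype.linearIndependent_iff]
  intro g hg
  by_contra hc
  push_neg at hc
  obtain ⟨s, hs⟩ := hc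
  set F : Finset ι := Finset.univ.filter (fun t => g t ≠ 0) with hF
  have hne : F.Nonempty := ⟨s, by simp [hF, hs]⟩
  obtain ⟨s0, hs0F, hs0max⟩ := F.exists_max_image low hne
  have hg0 : g s0 ≠ 0 := by simpa [hF] using hs0F
  have heval := congrFun hg (low s0)
  have heq : ∑ t : ι, g t * v t (low s0) = 0 := by
    simpa [Finset.sum_apply] using heval
  rw [Finset.sum_eq_single s0] at heq
  · rcases mul_eq_zero.mp heq with h | h
    · exact hg0 h
    · exact h1 s0 h
  · intro t _ hts
    by_cases hgt : g t = 0
    · simp [hgt]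
    · have htF : t ∈ F := by simp [hF, hgt]
      have hle : low t ≤ low s0 := hs0max t htF
      have hlt : low t < low s0 := lt_of_le_of_ne hle (fun he => hts (hinj he))
      simp [h2 t _ hlt]
  · simp

theorem llRank_eq_card_lows {m n : ℕ} (M : Matrix (Fin m) (Fin n) (ZMod 2))
    (W : Matrix (Fin n) (Fin n) (ZMod 2)) (hW : IsUnit W) (hUT : UpperTri W)
    (hRed : Reduced (M * W)) (i : Fin m) (j : Fin n) :
    llRank M i j =
      {l : Fin n | l ≤ j ∧ ∃ il : Fin m, IsLow (M * W) l il ∧ i ≤ il}.ncard := by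
  classical
  set R := M * W with hRdef
  set rowInc : {a : Fin m // i ≤ a} → Fin m := fun a => a.1 with hrowInc
  set colInc : {b : Fin n // b ≤ j} → Fin n := fun b => b.1 with hcolInc
  set W' : Matrix {b : Fin n // b ≤ j} {b : Fin n // b ≤ j} (ZMod 2) :=
    W.submatrix colInc colInc with hW'def
  -- Step 1: the lower-left submatrix of R factors
  have hsub : R.submatrix rowInc colInc = M.submatrix rowInc colInc * W' := by
    ext a b
    simp only [Matrix.submatrix_apply, Matrix.mul_apply, hRdef, hW'def, hrowInc, hcolInc]
    rw [← Finset.sum_subtype (Finset.univ.filter (fun c : Fin n => c ≤ j))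
      (fun c => by simp) (fun c => M a.1 c * W c b.1)]
    rw [Finset.sum_filter_of_ne]
    intro c _ hc
    by_contra hcj
    have : W c b.1 = 0 := hUT c b.1 (lt_of_le_of_lt b.2 (lt_of_not_ge hcj))
    simp [this] at hc
  -- diagonal of W is nonzero
  have hBT : W.BlockTriangular id := fun a b h => hUT a b h
  have hWdiag : ∀ c : Fin n, W c c ≠ 0 := by
    have hdet : IsUnit W.det := (Matrix.isUnit_iff_isUnit_det W).mp hW
    rw [Matrix.det_of_upperTriangular hBT, isUnit_iff_ne_zero,
      Finset.prod_ne_zero_iff] at hdet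
    intro c
    exact hdet c (Finset.mem_univ c)
  have hdet' : IsUnit W'.det := by
    have hBT' : W'.BlockTriangular id := by
      intro a b h
      exact hUT a.1 b.1 (Subtype.coe_lt_coe.mpr h)
    rw [Matrix.det_of_upperTriangular hBT', isUnit_iff_ne_zero, Finset.prod_ne_zero_iff]
    intro c _
    exact hWdiag c.1
  have hstep1 : llRank M i j = (R.submatrix rowInc colInc).rank := by
    rw [llRank, hsub, Matrix.rank_mul_eq_left_of_isUnit_det _ _ hdet']
  -- Step 2: rank of reduced lower-left submatrix
  set Slow : Set {b : Fin n // b ≤ j} := {s | ∃ il : Fin m, IsLow R s.1 il ∧ i ≤ il}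
    with hSlow
  set A := R.submatrix rowInc colInc with hA
  set v : ↥Slow → ({a : Fin m // i ≤ a} → ZMod 2) := fun s => Aᵀ s.1 with hv
  have hlowspec : ∀ s : ↥Slow, ∃ il : Fin m, IsLow R s.1.1 il ∧ i ≤ il := fun s => s.2
  choose lw hlw1 hlw2 using hlowspec
  set lowT : ↥Slow → {a : Fin m // i ≤ a} := fun s => ⟨lw s, hlw2 s⟩ with hlowT
  have hindep : LinearIndependent (ZMod 2) v := by
    apply lin_indep_of_lows v lowT
    · intro s
      exact (hlw1 s).1
    · intro s r hr
      by_contra hcon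
      have hle : r.1 ≤ lw s := (hlw1 s).2 r.1 hcon
      exact absurd (Subtype.coe_lt_coe.mpr hr) (not_lt.mpr hle)
    · intro s t hst
      by_contra hne
      have hne' : s.1.1 ≠ t.1.1 := fun h => hne (Subtype.ext (Subtype.ext h))
      have hlw : lw s = lw t := congrArg Subtype.val hst
      exact hRed s.1.1 t.1.1 hne' (lw s) (lw t) (hlw1 s) (hlw1 t) hlw
  have hrank : A.rank = Fintype.card ↥Slow := by
    rw [Matrix.rank_eq_finrank_span_cols]
    have hspan : Submodule.span (ZMod 2) (Set.range Aᵀ)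
        = Submodule.span (ZMod 2) (Set.range v) := by
      apply le_antisymm
      · rw [Submodule.span_le]
        rintro x ⟨l, rfl⟩
        by_cases hl : l ∈ Slow
        · exact Submodule.subset_span ⟨⟨l, hl⟩, rfl⟩
        · have hz : Aᵀ l = 0 := by
            funext a
            by_contra hz
            have hz' : R a.1 l.1 ≠ 0 := hz
            obtain ⟨il, hlow, hail⟩ := exists_isLow R l.1 a.1 hz'
            exact hl ⟨il, hlow, le_trans a.2 hail⟩
          rw [hz]
          exact Submodule.zero_mem _
      · rw [Submodule.span_le]
        rintro x ⟨s, rfl⟩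
        exact Submodule.subset_span ⟨s.1, rfl⟩
    rw [show A.col = Aᵀ from rfl, hspan, finrank_span_eq_card hindep]
  rw [hstep1, hrank]
  -- cardinalities
  rw [← Nat.card_coe_set_eq, Nat.card_eq_fintype_card]
  apply Fintype.card_congr
  exact
    { toFun := fun s => ⟨s.1.1, s.1.2, s.2⟩
      invFun := fun x => ⟨⟨x.1, x.2.1⟩, x.2.2⟩
      left_inv := fun _ => rfl
      right_inv := fun _ => rfl }
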